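/- With λ as above (λ' = √(κ + λ² − 2mλ^{2−n}), λ'' = λ + (n−2)mλ^{1−n}, λ(0) = ρ₀ the largest root of ρ² + κ − 2mρ^{2−n}), one has λ''(r) ≥ 0 for all r ∈ [0,∞). -/

import Mathlib

/-- Convexity of the warping function of the Kottler space: with
`λ' = √(κ + λ² − 2mλ^{2−n})`, `λ'' = λ + (n−2)mλ^{1−n}` and `λ(0) = ρ₀` the largest root
of `ρ² + κ − 2mρ^{2−n}`, one has `λ''(r) ≥ 0` for all `r ≥ 0`, given the mass
constraints (`m > 0` when `κ ≥ 0`, `m ≥ m_c` when `κ = −1`). -/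
theorem stmt_7 (n : ℕ) (hn : 3 ≤ n) (κ m ρ₀ : ℝ)
    (hκ : κ = -1 ∨ κ = 0 ∨ κ = 1)
    (hm : (0 ≤ κ → 0 < m) ∧
      (κ = -1 → m ≥ -((n : ℝ) - 2) ^ (((n : ℝ) - 2) / 2) / (n : ℝ) ^ ((n : ℝ) / 2)))
    (hρ₀ : 0 < ρ₀)
    (hroot : ρ₀ ^ 2 + κ - 2 * m / ρ₀ ^ (n - 2) = 0)
    (hlargest : ∀ ρ : ℝ, 0 < ρ → ρ ^ 2 + κ - 2 * m / ρ ^ (n - 2) = 0 → ρ ≤ ρ₀)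
    (lam : ℝ → ℝ) (hlam0 : lam 0 = ρ₀)
    (hge : ∀ r ≥ (0 : ℝ), lam r ≥ ρ₀)
    (hd1 : ∀ r ≥ (0 : ℝ),
      deriv lam r = Real.sqrt (κ + lam r ^ 2 - 2 * m / lam r ^ (n - 2)))
    (hd2 : ∀ r ≥ (0 : ℝ),
      deriv (deriv lam) r = lam r + (n - 2 : ℝ) * m / lam r ^ (n - 1)) :
    ∀ r ≥ (0 : ℝ), deriv (deriv lam) r ≥ 0 := by
  have hn3 : (3 : ℝ) ≤ (n : ℝ) := by exact_mod_cast hn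
  have hnpos : (0 : ℝ) < (n : ℝ) := by linarith
  -- key inequality: ρ₀ ^ n + (n - 2) * m ≥ 0
  have key : 0 ≤ ρ₀ ^ n + ((n : ℝ) - 2) * m := by
    rcases le_or_gt 0 m with hm0 | hm0
    · have h1 : 0 ≤ ρ₀ ^ n := pow_nonneg hρ₀.le n
      nlinarith
    · -- m < 0 forces κ = -1
      have hκ' : κ = -1 := by
        rcases hκ with h | h | h
        · exact h
        · exfalso; have := hm.1 (by rw [h]); linarith
        · exfalso; have := hm.1 (by rw [h]; norm_num); linarith
      subst hκ'
      have hmc := hm.2 rfl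
      set a : ℝ := ((n : ℝ) - 2) / n with ha_def
      have ha_pos : 0 < a := by
        rw [ha_def]; apply div_pos <;> linarith
      have ha_lt : a < 1 := by
        rw [ha_def, div_lt_one hnpos]; linarith
      set s : ℝ := Real.sqrt a with hs_def
      have hs_pos : 0 < s := Real.sqrt_pos.mpr ha_pos
      have hs_sq : s ^ 2 = a := Real.sq_sqrt ha_pos.le
      have hs_le1 : s ≤ 1 := by
        rw [hs_def]
        calc Real.sqrt a ≤ Real.sqrt 1 := Real.sqrt_le_sqrt ha_lt.le
        _ = 1 := Real.sqrt_one
      -- the polynomial f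
      set f : ℝ → ℝ := fun ρ => ρ ^ n - ρ ^ (n - 2) - 2 * m with hf_def
      have hf_cont : Continuous f := by fun_prop
      have hf1 : 0 ≤ f 1 := by simp [hf_def]; linarith
      -- compute s ^ (n-2) as an rpow
      set c : ℝ := a ^ (((n : ℝ) - 2) / 2) with hc_def
      have hc_pos : 0 < c := Real.rpow_pos_of_pos ha_pos _
      have hcast2 : ((n - 2 : ℕ) : ℝ) = (n : ℝ) - 2 := by
        rw [Nat.cast_sub (by omega)]; norm_num
      have hs_pow : s ^ (n - 2) = c := by
        rw [hs_def, Real.sqrt_eq_rpow, ← Real.rpow_natCast (a ^ ((1:ℝ)/2)) (n-2),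
          ← Real.rpow_mul ha_pos.le, hcast2, hc_def]
        ring_nf
      have hs_pow_n : s ^ n = c * a := by
        have : s ^ n = s ^ (n - 2) * s ^ 2 := by
          rw [← pow_add]; congr 1; omega
        rw [this, hs_pow, hs_sq]
      -- identify the critical mass with -c / n
      have hmc' : -((n : ℝ) - 2) ^ (((n : ℝ) - 2) / 2) / (n : ℝ) ^ ((n : ℝ) / 2) = -c / n := by
        have h1 : c = ((n : ℝ) - 2) ^ (((n : ℝ) - 2) / 2) / (n : ℝ) ^ (((n : ℝ) - 2) / 2) := by
          rw [hc_def, ha_def, Real.div_rpow (by linarith) hnpos.le]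
        have h2 : (n : ℝ) ^ ((n : ℝ) / 2) = (n : ℝ) ^ (((n : ℝ) - 2) / 2) * n := by
          rw [show (n : ℝ) / 2 = ((n : ℝ) - 2) / 2 + 1 by ring,
            Real.rpow_add hnpos, Real.rpow_one]
        have h3 : (0 : ℝ) < (n : ℝ) ^ (((n : ℝ) - 2) / 2) := Real.rpow_pos_of_pos hnpos _
        rw [h1, h2]
        field_simp
      rw [hmc'] at hmc
      -- f s ≤ 0
      have hfs : f s ≤ 0 := by
        have : f s = c * (a - 1) - 2 * m := by
          simp only [hf_def, hs_pow, hs_pow_n]; ring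
        rw [this]
        have ha1 : a - 1 = -2 / n := by
          rw [ha_def]; field_simp; ring
        rw [ha1]
        have : -c / n ≤ m := hmc
        have hc2 : c * (-2 / n) = -2 * (c / n) := by ring
        rw [hc2]
        have : -(c / n) ≤ m := by rw [neg_div] at hmc; exact hmc
        nlinarith [hc_pos, hnpos]
      -- IVT: there is a root ρ in [s, 1]
      obtain ⟨ρ, hρmem, hfρ⟩ := intermediate_value_Icc hs_le1 hf_cont.continuousOn ⟨hfs, hf1⟩
      have hρpos : 0 < ρ := lt_of_lt_of_le hs_pos hρmem.1
      have hρpow_pos : 0 < ρ ^ (n - 2) := pow_pos hρpos _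
      -- convert to the fractional root equation
      have hρroot : ρ ^ 2 + (-1) - 2 * m / ρ ^ (n - 2) = 0 := by
        have hρn : ρ ^ n = ρ ^ 2 * ρ ^ (n - 2) := by
          rw [← pow_add]; congr 1; omega
        have hf0 : ρ ^ n - ρ ^ (n - 2) - 2 * m = 0 := hfρ
        rw [hρn] at hf0
        field_simp
        linarith
      have hρle : ρ ≤ ρ₀ := hlargest ρ hρpos hρroot
      have hsle : s ≤ ρ₀ := le_trans hρmem.1 hρle
      have ha_le : a ≤ ρ₀ ^ 2 := by
        calc a = s ^ 2 := hs_sq.symm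
        _ ≤ ρ₀ ^ 2 := pow_le_pow_left₀ hs_pos.le hsle 2
      -- use the root equation for ρ₀
      have hρ₀pow_pos : 0 < ρ₀ ^ (n - 2) := pow_pos hρ₀ _
      have hroot' : ρ₀ ^ n - ρ₀ ^ (n - 2) = 2 * m := by
        have hρ₀n : ρ₀ ^ n = ρ₀ ^ 2 * ρ₀ ^ (n - 2) := by
          rw [← pow_add]; congr 1; omega
        field_simp at hroot
        rw [hρ₀n]
        linarith
      -- conclude: n ρ₀² ≥ n - 2
      have hfinal : (n : ℝ) - 2 ≤ (n : ℝ) * ρ₀ ^ 2 := by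
        have : (n : ℝ) * a = (n : ℝ) - 2 := by
          rw [ha_def]; field_simp
        nlinarith
      have hρ₀n : ρ₀ ^ n = ρ₀ ^ 2 * ρ₀ ^ (n - 2) := by
        rw [← pow_add]; congr 1; omega
      have h1 : 0 ≤ ((n : ℝ) * ρ₀ ^ 2 - ((n : ℝ) - 2)) * ρ₀ ^ (n - 2) :=
        mul_nonneg (by linarith) hρ₀pow_pos.le
      have h2 : ρ₀ ^ n + ((n : ℝ) - 2) * m =
          (((n : ℝ) * ρ₀ ^ 2 - ((n : ℝ) - 2)) * ρ₀ ^ (n - 2)) / 2 := by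
        linear_combination ((n : ℝ) / 2) * hρ₀n - (((n : ℝ) - 2) / 2) * hroot'
      rw [h2]
      linarith
  -- finish
  intro r hr
  rw [hd2 r hr]
  have hL : ρ₀ ≤ lam r := hge r hr
  have hLpos : 0 < lam r := lt_of_lt_of_le hρ₀ hL
  have hLpow_pos : 0 < lam r ^ (n - 1) := pow_pos hLpos _
  have hLn : lam r ^ n = lam r * lam r ^ (n - 1) := by
    conv_lhs => rw [show n = (n-1)+1 by omega]
    rw [pow_succ, mul_comm]
  have hLkey : 0 ≤ lam r ^ n + ((n : ℝ) - 2) * m := by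
    have hmono : ρ₀ ^ n ≤ lam r ^ n := pow_le_pow_left₀ hρ₀.le hL n
    linarith
  have : lam r + ((n : ℝ) - 2) * m / lam r ^ (n - 1) =
      (lam r ^ n + ((n : ℝ) - 2) * m) / lam r ^ (n - 1) := by
    rw [hLn]; field_simp
  rw [this]
  exact div_nonneg hLkey hLpow_pos.le
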